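/- arXiv:1912.07120 — 2 statements merged into one kernel-verified Lean document; each statement's English description precedes it below -/
import Mathlib

section
/- Let (Ω, ℱ, μ) be a standard Borel probability space, 𝓗 ⊆ ℱ a sub-σ-algebra, X and e real-valued random variables on Ω, and M1L, M1U, M2L, M2U real-valued 𝓗-measurable random variables. Let α₁, α₂, π₁, π₂ ∈ [0,1]. Suppose μ{ω : μ({ω' : M1L(ω') ≤ X(ω') ≤ M1U(ω')} | 𝓗)(ω) ≥ 1 − α₁} ≥ 1 − π₁ and μ{ω : μ({ω' : M2L(ω') ≤ e(ω') ≤ M2U(ω')} | 𝓗)(ω) ≥ 1 − α₂} ≥ 1 − π₂. Then μ{ω : μ({ω' : M1L(ω') + M2L(ω') ≤ X(ω') + e(ω') ≤ M1U(ω') + M2U(ω')} | 𝓗)(ω) ≥ 1 − α₁ − α₂} ≥ 1 − π₁ − π₂. -/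
open MeasureTheory ProbabilityTheory

/-- Lemma 1 (Prediction Interval) of the paper: on a standard Borel probability space with
sub-σ-algebra `m`, if the `m`-conditional probability that `M1L ≤ X ≤ M1U` is at least `1 - α₁`
with μ-probability at least `1 - π₁`, and the `m`-conditional probability that `M2L ≤ e ≤ M2U`
is at least `1 - α₂` with μ-probability at least `1 - π₂`, then the `m`-conditional probability
that `M1L + M2L ≤ X + e ≤ M1U + M2U` is at least `1 - α₁ - α₂` with μ-probability at least
`1 - π₁ - π₂`. -/
theorem prediction_interval_conditional
    {Ω : Type*} {m mΩ : MeasurableSpace Ω} [StandardBorelSpace Ω]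
    (hm : m ≤ mΩ) (μ : Measure Ω) [IsProbabilityMeasure μ]
    (X e M1L M1U M2L M2U : Ω → ℝ)
    (hX : Measurable X) (he : Measurable e)
    (hM1L : Measurable[m] M1L) (hM1U : Measurable[m] M1U)
    (hM2L : Measurable[m] M2L) (hM2U : Measurable[m] M2U)
    (α₁ α₂ π₁ π₂ : ℝ)
    (hα₁ : α₁ ∈ Set.Icc (0:ℝ) 1) (hα₂ : α₂ ∈ Set.Icc (0:ℝ) 1)
    (hπ₁ : π₁ ∈ Set.Icc (0:ℝ) 1) (hπ₂ : π₂ ∈ Set.Icc (0:ℝ) 1)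
    (h1 : ENNReal.ofReal (1 - π₁) ≤
      μ {ω | ENNReal.ofReal (1 - α₁) ≤
        condExpKernel μ m ω {ω' | M1L ω' ≤ X ω' ∧ X ω' ≤ M1U ω'}})
    (h2 : ENNReal.ofReal (1 - π₂) ≤
      μ {ω | ENNReal.ofReal (1 - α₂) ≤
        condExpKernel μ m ω {ω' | M2L ω' ≤ e ω' ∧ e ω' ≤ M2U ω'}}) :
    ENNReal.ofReal (1 - π₁ - π₂) ≤
      μ {ω | ENNReal.ofReal (1 - α₁ - α₂) ≤
        condExpKernel μ m ω
          {ω' | M1L ω' + M2L ω' ≤ X ω' + e ω' ∧ X ω' + e ω' ≤ M1U ω' + M2U ω'}} := by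
  obtain ⟨hα₁0, hα₁1⟩ := hα₁
  obtain ⟨hα₂0, hα₂1⟩ := hα₂
  obtain ⟨hπ₁0, hπ₁1⟩ := hπ₁
  obtain ⟨hπ₂0, hπ₂1⟩ := hπ₂
  set A : Set Ω := {ω' | M1L ω' ≤ X ω' ∧ X ω' ≤ M1U ω'} with hA_def
  set B : Set Ω := {ω' | M2L ω' ≤ e ω' ∧ e ω' ≤ M2U ω'} with hB_def
  set C : Set Ω := {ω' | M1L ω' + M2L ω' ≤ X ω' + e ω' ∧ X ω' + e ω' ≤ M1U ω' + M2U ω'} with hC_def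
  have hM1L' : Measurable M1L := hM1L.mono hm le_rfl
  have hM1U' : Measurable M1U := hM1U.mono hm le_rfl
  have hM2L' : Measurable M2L := hM2L.mono hm le_rfl
  have hM2U' : Measurable M2U := hM2U.mono hm le_rfl
  have hA : MeasurableSet A :=
    (measurableSet_le hM1L' hX).inter (measurableSet_le hX hM1U')
  have hB : MeasurableSet B :=
    (measurableSet_le hM2L' he).inter (measurableSet_le he hM2U')
  have hC : MeasurableSet C :=
    (measurableSet_le (hM1L'.add hM2L') (hX.add he)).inter
      (measurableSet_le (hX.add he) (hM1U'.add hM2U'))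
  have hABC : A ∩ B ⊆ C := by
    rintro ω' ⟨⟨ha1, ha2⟩, ⟨hb1, hb2⟩⟩
    exact ⟨add_le_add ha1 hb1, add_le_add ha2 hb2⟩
  by_cases hα : 1 - α₁ - α₂ ≤ 0
  · have hset : {ω | ENNReal.ofReal (1 - α₁ - α₂) ≤ condExpKernel μ m ω C} = Set.univ := by
      ext ω
      simp [ENNReal.ofReal_eq_zero.mpr hα]
    rw [hset, measure_univ]
    exact ENNReal.ofReal_le_one.mpr (by linarith)
  push_neg at hα
  -- pointwise step
  have key : ∀ ω, ENNReal.ofReal (1 - α₁) ≤ condExpKernel μ m ω A →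
      ENNReal.ofReal (1 - α₂) ≤ condExpKernel μ m ω B →
      ENNReal.ofReal (1 - α₁ - α₂) ≤ condExpKernel μ m ω C := by
    intro ω ha hb
    have hsum : condExpKernel μ m ω A + condExpKernel μ m ω B ≤
        1 + condExpKernel μ m ω (A ∩ B) := by
      rw [← measure_union_add_inter A hB]
      exact add_le_add_left (prob_le_one) _
    have h1' : ENNReal.ofReal (1 - α₁) + ENNReal.ofReal (1 - α₂) ≤
        1 + condExpKernel μ m ω (A ∩ B) := le_trans (add_le_add ha hb) hsum
    rw [← ENNReal.ofReal_add (by linarith) (by linarith)] at h1'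
    have h2' : ENNReal.ofReal (1 - α₁ + (1 - α₂)) - 1 ≤ condExpKernel μ m ω (A ∩ B) := by
      rw [tsub_le_iff_right]
      exact h1'.trans_eq (add_comm _ _)
    calc ENNReal.ofReal (1 - α₁ - α₂)
        = ENNReal.ofReal (1 - α₁ + (1 - α₂)) - 1 := by
          rw [show (1 - α₁ - α₂ : ℝ) = (1 - α₁ + (1 - α₂)) - 1 by ring,
            ENNReal.ofReal_sub _ zero_le_one, ENNReal.ofReal_one]
      _ ≤ condExpKernel μ m ω (A ∩ B) := h2'
      _ ≤ condExpKernel μ m ω C := measure_mono hABC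
  -- outer step
  set S : Set Ω := {ω | ENNReal.ofReal (1 - α₁) ≤ condExpKernel μ m ω A} with hS_def
  set T : Set Ω := {ω | ENNReal.ofReal (1 - α₂) ≤ condExpKernel μ m ω B} with hT_def
  have hT : MeasurableSet T :=
    measurableSet_le measurable_const ((measurable_condExpKernel hB).mono hm le_rfl)
  have hST : S ∩ T ⊆ {ω | ENNReal.ofReal (1 - α₁ - α₂) ≤ condExpKernel μ m ω C} :=
    fun ω ⟨hs, ht⟩ => key ω hs ht
  have hsum : μ S + μ T ≤ 1 + μ (S ∩ T) := by
    rw [← measure_union_add_inter S hT]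
    exact add_le_add_left (prob_le_one) _
  have h1' : ENNReal.ofReal (1 - π₁) + ENNReal.ofReal (1 - π₂) ≤ 1 + μ (S ∩ T) :=
    le_trans (add_le_add h1 h2) hsum
  rw [← ENNReal.ofReal_add (by linarith) (by linarith)] at h1'
  have h2' : ENNReal.ofReal (1 - π₁ + (1 - π₂)) - 1 ≤ μ (S ∩ T) := by
    rw [tsub_le_iff_right]
    exact h1'.trans_eq (add_comm _ _)
  calc ENNReal.ofReal (1 - π₁ - π₂)
      = ENNReal.ofReal (1 - π₁ + (1 - π₂)) - 1 := by
        rw [show (1 - π₁ - π₂ : ℝ) = (1 - π₁ + (1 - π₂)) - 1 by ring,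
          ENNReal.ofReal_sub _ zero_le_one, ENNReal.ofReal_one]
    _ ≤ μ (S ∩ T) := h2'
    _ ≤ _ := measure_mono hST
end

section
/- Given a set Δ ⊆ ℝ^d, a symmetric d × d real matrix Q, and ξ ∈ ℝ^d, define M_ξ = {δ ∈ Δ : δᵀQδ − 2ξᵀδ ≤ 0}. Then for every c ∈ ℝ^d and every κ ∈ ℝ, the sets {ξ ∈ ℝ^d : cᵀδ ≥ κ for all δ ∈ M_ξ} and {ξ ∈ ℝ^d : cᵀδ ≤ κ for all δ ∈ M_ξ} are convex subsets of ℝ^d. -/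
open Matrix

lemma localization_aux {d : ℕ} (Δ : Set (Fin d → ℝ)) (Q : Matrix (Fin d) (Fin d) ℝ)
    (P : (Fin d → ℝ) → Prop) :
    Convex ℝ {ξ : Fin d → ℝ |
        ∀ δ ∈ {δ ∈ Δ | δ ⬝ᵥ (Q *ᵥ δ) - 2 * (ξ ⬝ᵥ δ) ≤ 0}, P δ} := by
  intro ξ hξ η hη a b ha hb hab δ hδ
  obtain ⟨hΔ, hq⟩ := hδ
  have hdot : (a • ξ + b • η) ⬝ᵥ δ = a * (ξ ⬝ᵥ δ) + b * (η ⬝ᵥ δ) := by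
    rw [add_dotProduct, smul_dotProduct, smul_dotProduct]; rfl
  rw [hdot] at hq
  by_cases h1 : δ ⬝ᵥ (Q *ᵥ δ) - 2 * (ξ ⬝ᵥ δ) ≤ 0
  · exact hξ δ ⟨hΔ, h1⟩
  · apply hη δ ⟨hΔ, ?_⟩
    by_contra h2
    push_neg at h1 h2
    rcases ha.eq_or_lt with rfl | ha'
    · simp only [zero_add] at hab; subst hab; nlinarith
    · have h3 : (a + b) * (δ ⬝ᵥ (Q *ᵥ δ)) = δ ⬝ᵥ (Q *ᵥ δ) := by rw [hab, one_mul]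
      nlinarith [mul_pos ha' h1, mul_nonneg hb h2.le, h3]

/-- Second conclusion of Lemma 2 (Optimization Bounds): with
`M_ξ = {δ ∈ Δ : δᵀQδ − 2ξᵀδ ≤ 0}`, for every `c` and `κ` the sets
`{ξ : cᵀδ ≥ κ for all δ ∈ M_ξ}` and `{ξ : cᵀδ ≤ κ for all δ ∈ M_ξ}` are convex. -/
theorem localization_level_sets_convex
    {d : ℕ} (Δ : Set (Fin d → ℝ)) (Q : Matrix (Fin d) (Fin d) ℝ) (hQ : Q.IsSymm)
    (c : Fin d → ℝ) (κ : ℝ) :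
    Convex ℝ {ξ : Fin d → ℝ |
        ∀ δ ∈ {δ ∈ Δ | δ ⬝ᵥ (Q *ᵥ δ) - 2 * (ξ ⬝ᵥ δ) ≤ 0}, κ ≤ c ⬝ᵥ δ} ∧
      Convex ℝ {ξ : Fin d → ℝ |
        ∀ δ ∈ {δ ∈ Δ | δ ⬝ᵥ (Q *ᵥ δ) - 2 * (ξ ⬝ᵥ δ) ≤ 0}, c ⬝ᵥ δ ≤ κ} := by
  exact ⟨localization_aux Δ Q _, localization_aux Δ Q _⟩
end
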